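/- If φ = Σ_{i=1}^{d₁} |i⟩⊗φᵢ and ψ = Σ_{i=1}^{d₁} |i⟩⊗ψᵢ are tensors in ℂ^{d₁}⊗(V₂⊗V₃) with (φᵢ) and (ψᵢ) linearly independent families in V₂⊗V₃, then there exist invertible L₁, L₂, L₃ with φ = (L₁⊗L₂⊗L₃)ψ if and only if there exist invertible L₂, L₃ with span{φᵢ : 1≤i≤d₁} = (L₂⊗L₃)(span{ψᵢ : 1≤i≤d₁}). -/

import Mathlib

/-!
STATEMENT 17: If φ = Σᵢ|i⟩⊗φᵢ and ψ = Σᵢ|i⟩⊗ψᵢ are tensors in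
ℂ^{d₁}⊗(V₂⊗V₃) with (φᵢ), (ψᵢ) linearly independent families in V₂⊗V₃, then
there exist invertible L₁, L₂, L₃ with φ = (L₁⊗L₂⊗L₃)ψ iff there exist
invertible L₂, L₃ with span{φᵢ} = (L₂⊗L₃)(span{ψᵢ}).
The ℂ^{d₁} component is carried by the family index: the i-th component of
(L₁⊗L₂⊗L₃)ψ is Σⱼ (L₁)ᵢⱼ • (L₂⊗L₃)(ψⱼ).
-/

open scoped TensorProduct BigOperators

lemma span_eq_of_matrix {M : Type*} [AddCommGroup M] [Module ℂ M] {n : ℕ}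
    (L : Matrix (Fin n) (Fin n) ℂ) (hL : IsUnit L) (x φ : Fin n → M)
    (h : ∀ i, φ i = ∑ j, L i j • x j) :
    Submodule.span ℂ (Set.range φ) = Submodule.span ℂ (Set.range x) := by
  have hInv : Invertible L := hL.invertible
  apply le_antisymm
  · rw [Submodule.span_le]
    rintro _ ⟨i, rfl⟩
    rw [h i]
    exact Submodule.sum_mem _ fun j _ =>
      Submodule.smul_mem _ _ (Submodule.subset_span ⟨j, rfl⟩)
  · rw [Submodule.span_le]
    rintro _ ⟨k, rfl⟩
    have : x k = ∑ i, (⅟L) k i • φ i := by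
      have := congrFun (congrFun (invOf_mul_self L) k) k
      calc x k = ∑ j, ((⅟L * L) k j) • x j := by
            rw [invOf_mul_self]
            simp [Matrix.one_apply, Finset.sum_ite_eq, ite_smul]
        _ = ∑ i, (⅟L) k i • φ i := by
            simp only [h, Matrix.mul_apply, Finset.smul_sum, Finset.sum_smul,
              smul_smul]
            rw [Finset.sum_comm]
    rw [this]
    exact Submodule.sum_mem _ fun i _ =>
      Submodule.smul_mem _ _ (Submodule.subset_span ⟨i, rfl⟩)

theorem slocc_equiv_iff_span_equiv
    {V₂ V₃ : Type*}
    [AddCommGroup V₂] [Module ℂ V₂] [FiniteDimensional ℂ V₂]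
    [AddCommGroup V₃] [Module ℂ V₃] [FiniteDimensional ℂ V₃]
    (d₁ : ℕ) (φ ψ : Fin d₁ → V₂ ⊗[ℂ] V₃)
    (hφ : LinearIndependent ℂ φ) (hψ : LinearIndependent ℂ ψ) :
    (∃ (L₁ : Matrix (Fin d₁) (Fin d₁) ℂ) (L₂ : V₂ ≃ₗ[ℂ] V₂) (L₃ : V₃ ≃ₗ[ℂ] V₃),
        IsUnit L₁ ∧
        ∀ i, φ i = ∑ j, L₁ i j •
          TensorProduct.map L₂.toLinearMap L₃.toLinearMap (ψ j)) ↔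
      (∃ (L₂ : V₂ ≃ₗ[ℂ] V₂) (L₃ : V₃ ≃ₗ[ℂ] V₃),
        Submodule.span ℂ (Set.range φ) =
          Submodule.map (TensorProduct.map L₂.toLinearMap L₃.toLinearMap)
            (Submodule.span ℂ (Set.range ψ))) := by
  constructor
  · rintro ⟨L₁, L₂, L₃, hU, h⟩
    refine ⟨L₂, L₃, ?_⟩
    set T := TensorProduct.map L₂.toLinearMap L₃.toLinearMap with hT
    rw [Submodule.map_span, ← Set.range_comp]
    exact span_eq_of_matrix L₁ hU (fun j => T (ψ j)) φ h
  · rintro ⟨L₂, L₃, hspan⟩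
    set T := TensorProduct.map L₂.toLinearMap L₃.toLinearMap with hT
    have hTE : T = (TensorProduct.congr L₂ L₃).toLinearMap := rfl
    have hinj : Function.Injective T := by
      rw [hTE]; exact (TensorProduct.congr L₂ L₃).injective
    set x : Fin d₁ → V₂ ⊗[ℂ] V₃ := fun j => T (ψ j) with hx
    have hxli : LinearIndependent ℂ x :=
      hψ.map' T (LinearMap.ker_eq_bot.mpr hinj)
    have hspan' : Submodule.span ℂ (Set.range φ) = Submodule.span ℂ (Set.range x) := by
      rw [hspan, Submodule.map_span, ← Set.range_comp]; rfl
    let bφ : Module.Basis (Fin d₁) ℂ (Submodule.span ℂ (Set.range φ)) := Module.Basis.span hφ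
    let bx : Module.Basis (Fin d₁) ℂ (Submodule.span ℂ (Set.range x)) := Module.Basis.span hxli
    let bx' : Module.Basis (Fin d₁) ℂ (Submodule.span ℂ (Set.range φ)) :=
      bx.map (LinearEquiv.ofEq _ _ hspan'.symm)
    let M := bx'.toMatrix bφ
    have hMinv : Invertible M := bx'.invertibleToMatrix bφ
    refine ⟨M.transpose, L₂, L₃, ?_, ?_⟩
    · rw [Matrix.isUnit_iff_isUnit_det, Matrix.det_transpose,
        ← Matrix.isUnit_iff_isUnit_det]
      exact isUnit_of_invertible M
    · intro i
      have key : ∑ j, M j i • bx' j = bφ i := Module.Basis.sum_toMatrix_smul_self bx' _ i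
      have := congrArg (Subtype.val) key
      simp only [AddSubmonoidClass.coe_finset_sum, SetLike.val_smul] at this
      have hbφ : (bφ i : V₂ ⊗[ℂ] V₃) = φ i := congrArg Subtype.val (Module.Basis.span_apply hφ i)
      have hbx : ∀ j, (bx' j : V₂ ⊗[ℂ] V₃) = x j := by
        intro j
        show ((LinearEquiv.ofEq _ _ hspan'.symm) (bx j) : V₂ ⊗[ℂ] V₃) = x j
        rw [LinearEquiv.coe_ofEq_apply]
        exact congrArg Subtype.val (Module.Basis.span_apply hxli j)
      rw [hbφ] at this
      simp only [hbx] at this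
      rw [← this]
      rfl
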